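/- arXiv:1003.2496 — 3 statements merged into one kernel-verified Lean document; each statement's English description precedes it below -/
import Mathlib

section
/- Suppose κ is an uncountable cardinal, T is a set of reals of cardinality κ, and 𝒜 is a family of countably infinite subsets of T with |𝒜| = κ such that (a) for each A ∈ 𝒜 the set (closure of A) ∩ T has cardinality κ, and (b) every subset of T of cardinality ℵ₁ contains some member of 𝒜. Then there exists an almost disjoint family ℬ of countably infinite subsets of T with |ℬ| = κ such that every subset of T of cardinality ℵ₁ contains some member of ℬ. -/
open Cardinal Set

/-- `B` has all but finitely many points near `p`, at every scale. -/
def ClustersAt (B : Set ℝ) (p : ℝ) : Prop := ∀ ε > 0, (B \ Metric.ball p ε).Finite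

lemma clustersAt_inter_finite {B1 B2 : Set ℝ} {p q : ℝ} (h1 : ClustersAt B1 p)
    (h2 : ClustersAt B2 q) (hpq : p ≠ q) : (B1 ∩ B2).Finite := by
  have hd : 0 < dist p q := dist_pos.2 hpq
  have hε : 0 < dist p q / 2 := by linarith
  refine Set.Finite.subset ((h1 _ hε).union (h2 _ hε)) ?_
  rintro x ⟨hx1, hx2⟩
  by_cases hx : x ∈ Metric.ball p (dist p q / 2)
  · right
    refine ⟨hx2, fun hq => ?_⟩
    have h1' : dist x p < dist p q / 2 := Metric.mem_ball.1 hx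
    have h2' : dist x q < dist p q / 2 := Metric.mem_ball.1 hq
    have h3' : dist p q ≤ dist p x + dist x q := dist_triangle p x q
    have h4' : dist p x = dist x p := dist_comm p x
    linarith
  · left; exact ⟨hx1, hx⟩

lemma exists_cluster_subset {A : Set ℝ} {p : ℝ} (hp : p ∈ closure A) (hpA : p ∉ A) :
    ∃ B : Set ℝ, B ⊆ A ∧ #B = ℵ₀ ∧ ClustersAt B p := by
  have key : ∀ (n : ℕ) (a : A), ∃ b : A, dist (b : ℝ) p < min (dist (a : ℝ) p) (1 / (n + 1)) := by
    intro n a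
    have hap : (a : ℝ) ≠ p := fun h => hpA (h ▸ a.2)
    have hmin : 0 < min (dist (a : ℝ) p) (1 / ((n : ℝ) + 1)) :=
      lt_min (dist_pos.2 hap) (by positivity)
    obtain ⟨b, hbA, hb⟩ := Metric.mem_closure_iff.1 hp _ hmin
    exact ⟨⟨b, hbA⟩, by rwa [dist_comm]⟩
  have hA : A.Nonempty := closure_nonempty_iff.1 ⟨p, hp⟩
  obtain ⟨a0, ha0⟩ := hA
  let v : ℕ → A := fun n => Nat.rec ⟨a0, ha0⟩ (fun n a => (key n a).choose) n
  have hv : ∀ n : ℕ, dist (v (n + 1)).1 p < min (dist (v n).1 p) (1 / (n + 1)) := by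
    intro n
    show dist ((key n (v n)).choose).1 p < _
    exact (key n (v n)).choose_spec
  let u : ℕ → ℝ := fun n => (v (n + 1) : ℝ)
  have hu1 : ∀ n : ℕ, dist (u n) p < 1 / (n + 1) := fun n => (lt_min_iff.1 (hv n)).2
  have hanti : StrictAnti (fun n => dist (u n) p) := by
    apply strictAnti_nat_of_succ_lt
    intro n
    exact lt_of_lt_of_le (hv (n + 1)) (min_le_left _ _)
  have huinj : Function.Injective u := by
    intro m n h
    exact hanti.injective (by simp only [h])
  refine ⟨Set.range u, ?_, ?_, ?_⟩
  · rintro x ⟨n, rfl⟩; exact (v (n + 1)).2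
  · rw [Cardinal.mk_range_eq _ huinj, Cardinal.mk_nat]
  · intro ε hε
    have hfin : {n : ℕ | (n : ℝ) ≤ 1 / ε}.Finite := by
      apply Set.Finite.subset (Set.finite_Iic ⌈1 / ε⌉₊)
      intro n hn
      have : (n : ℝ) ≤ (⌈1 / ε⌉₊ : ℝ) := le_trans hn (Nat.le_ceil _)
      exact_mod_cast this
    refine Set.Finite.subset (hfin.image u) ?_
    rintro x ⟨⟨n, rfl⟩, hx⟩
    refine ⟨n, ?_, rfl⟩
    have h1 : ε ≤ dist (u n) p := by
      by_contra h
      exact hx (Metric.mem_ball.2 (lt_of_not_ge h))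
    have h2 : ε < 1 / ((n : ℝ) + 1) := lt_of_le_of_lt h1 (hu1 n)
    have h3 : ε * ((n : ℝ) + 1) < 1 := (lt_div_iff₀ (by positivity)).1 h2
    show (n : ℝ) ≤ 1 / ε
    rw [le_div_iff₀ hε]
    nlinarith

/-- If `κ` is uncountable, `T ⊆ ℝ` has cardinality `κ`, and `𝒜` is a family of countably
infinite subsets of `T` of cardinality `κ` with (a) `|closure A ∩ T| = κ` for each `A ∈ 𝒜`
and (b) every subset of `T` of cardinality `ℵ₁` contains a member of `𝒜`, then there is an
almost disjoint family `ℬ` of countably infinite subsets of `T` with `|ℬ| = κ` such that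
every subset of `T` of cardinality `ℵ₁` contains a member of `ℬ`. -/
theorem stmt1 (κ : Cardinal) (hκ : Cardinal.aleph0 < κ)
    (T : Set ℝ) (hT : #T = κ)
    (𝒜 : Set (Set ℝ))
    (h𝒜sub : ∀ A ∈ 𝒜, A ⊆ T ∧ #A = Cardinal.aleph0)
    (h𝒜card : #𝒜 = κ)
    (ha : ∀ A ∈ 𝒜, #(closure A ∩ T : Set ℝ) = κ)
    (hb : ∀ X : Set ℝ, X ⊆ T → #X = Cardinal.aleph 1 → ∃ A ∈ 𝒜, A ⊆ X) :
    ∃ ℬ : Set (Set ℝ),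
      (∀ B ∈ ℬ, B ⊆ T ∧ #B = Cardinal.aleph0) ∧
      #ℬ = κ ∧
      (∀ B ∈ ℬ, ∀ B' ∈ ℬ, B ≠ B' → (B ∩ B').Finite) ∧
      (∀ X : Set ℝ, X ⊆ T → #X = Cardinal.aleph 1 → ∃ B ∈ ℬ, B ⊆ X) := by
  classical
  have hmkα : #(κ.ord.ToType) = κ := Cardinal.mk_ord_toType κ
  obtain ⟨e⟩ : Nonempty (κ.ord.ToType ≃ 𝒜) := Cardinal.eq.1 (by rw [hmkα, h𝒜card])
  set Ax : κ.ord.ToType → Set ℝ := fun x => (e x : Set ℝ) with hAxdef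
  have hAx𝒜 : ∀ x, Ax x ∈ 𝒜 := fun x => (e x).2
  let F : κ.ord.ToType → ℝ := WellFounded.fix wellFounded_lt (fun x ih =>
    if h : ((closure (Ax x) ∩ T) \ (Ax x ∪ {r | ∃ y, ∃ _ : y < x, ih y ‹_› = r})).Nonempty
    then h.choose else 0)
  have hFeq : ∀ x, F x = if h : ((closure (Ax x) ∩ T) \
      (Ax x ∪ {r | ∃ y, ∃ _ : y < x, F y = r})).Nonempty then h.choose else 0 :=
    fun x => WellFounded.fix_eq _ _ x
  have hne : ∀ x, ((closure (Ax x) ∩ T) \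
      (Ax x ∪ {r | ∃ y, ∃ _ : y < x, F y = r})).Nonempty := by
    intro x
    rw [Set.nonempty_iff_ne_empty]
    intro hemp
    rw [Set.diff_eq_empty] at hemp
    have hcard : #(closure (Ax x) ∩ T : Set ℝ) ≤
        #(Ax x) + #({r | ∃ y, ∃ _ : y < x, F y = r} : Set ℝ) :=
      le_trans (Cardinal.mk_le_mk_of_subset hemp) (Cardinal.mk_union_le _ _)
    have himg : {r | ∃ y, ∃ _ : y < x, F y = r} = F '' Set.Iio x := by
      ext r
      simp only [Set.mem_setOf_eq, Set.mem_image, Set.mem_Iio]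
      constructor
      · rintro ⟨y, hy, rfl⟩; exact ⟨y, hy, rfl⟩
      · rintro ⟨y, hy, rfl⟩; exact ⟨y, hy, rfl⟩
    have h2 : #({r | ∃ y, ∃ _ : y < x, F y = r} : Set ℝ) < κ := by
      rw [himg]
      exact lt_of_le_of_lt Cardinal.mk_image_le (Cardinal.mk_Iio_ord_toType x)
    have h3 : #(Ax x) < κ := by rw [(h𝒜sub _ (hAx𝒜 x)).2]; exact hκ
    have h4 := lt_of_le_of_lt hcard (Cardinal.add_lt_of_lt hκ.le h3 h2)
    rw [ha _ (hAx𝒜 x)] at h4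
    exact lt_irrefl _ h4
  have hF : ∀ x, F x ∈ (closure (Ax x) ∩ T) \
      (Ax x ∪ {r | ∃ y, ∃ _ : y < x, F y = r}) := by
    intro x
    rw [hFeq x, dif_pos (hne x)]
    exact (hne x).choose_spec
  have hFinj : Function.Injective F := by
    intro x y hxy
    rcases lt_trichotomy x y with h | h | h
    · refine absurd (Set.mem_union_right _ ?_) (hF y).2
      exact ⟨x, h, hxy⟩
    · exact h
    · refine absurd (Set.mem_union_right _ ?_) (hF x).2
      exact ⟨y, h, hxy.symm⟩
  have hFcl : ∀ x, F x ∈ closure (Ax x) := fun x => (hF x).1.1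
  have hFnA : ∀ x, F x ∉ Ax x := fun x h => (hF x).2 (Set.mem_union_left _ h)
  choose B hB1 hB2 hB3 using fun x => exists_cluster_subset (hFcl x) (hFnA x)
  have hBinf : ∀ x, ¬ (B x).Finite := by
    intro x hfin
    have hlt := hfin.lt_aleph0
    rw [hB2 x] at hlt
    exact lt_irrefl _ hlt
  have hBinj : Function.Injective B := by
    intro x y hxy
    by_contra hne'
    have hF' : F x ≠ F y := fun h => hne' (hFinj h)
    have hfin : (B x ∩ B y).Finite := clustersAt_inter_finite (hB3 x) (hB3 y) hF'
    rw [hxy, Set.inter_self] at hfin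
    exact hBinf y hfin
  refine ⟨Set.range B, ?_, ?_, ?_, ?_⟩
  · rintro b ⟨x, rfl⟩
    exact ⟨(hB1 x).trans (h𝒜sub _ (hAx𝒜 x)).1, hB2 x⟩
  · rw [Cardinal.mk_range_eq _ hBinj, hmkα]
  · rintro b ⟨x, rfl⟩ b' ⟨y, rfl⟩ hbb
    have hF' : F x ≠ F y := fun h => hbb (by rw [hFinj h])
    exact clustersAt_inter_finite (hB3 x) (hB3 y) hF'
  · intro X hX hXcard
    obtain ⟨A, hA𝒜, hAX⟩ := hb X hX hXcard
    refine ⟨B (e.symm ⟨A, hA𝒜⟩), ⟨_, rfl⟩, ?_⟩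
    have hAeq : Ax (e.symm ⟨A, hA𝒜⟩) = A := by
      simp [hAxdef]
    refine (hB1 _).trans ?_
    rw [hAeq]
    exact hAX
end

section
/- For the *-product P = ∏*_{i∈X} P_i of posets, with p ≤ q iff p(i) ≤ q(i) for all i and {i : p(i) < q(i) < 1} is finite: p ≤ q if and only if there exists r with p ≤_h r ≤_v q, and also if and only if there exists t with p ≤_v t ≤_h q. -/
open Cardinal

variable {X : Type} {P : X → Type} [∀ i, PartialOrder (P i)] [∀ i, OrderTop (P i)]

/-- The support of an element of the product of posets with top elements. -/
def starSupp (p : ∀ i, P i) : Set X := {i | p i ≠ ⊤}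

/-- The order of the *-product: pointwise `≤` with only finitely many coordinates where
`p i < q i < ⊤`. -/
def starLe (p q : ∀ i, P i) : Prop :=
  (∀ i, p i ≤ q i) ∧ {i | p i < q i ∧ q i < ⊤}.Finite

/-- The horizontal relation: `supp p ⊇ supp q` and `p` agrees with `q` on `supp q`. -/
def starLeH (p q : ∀ i, P i) : Prop := ∀ i, q i ≠ ⊤ → p i = q i

/-- The vertical relation: `p ≤ q` with equal supports. -/
def starLeV (p q : ∀ i, P i) : Prop := starLe p q ∧ starSupp p = starSupp q

/-- In the *-product `∏*_{i∈X} P_i`: `p ≤ q` iff there is `r` with `p ≤_h r ≤_v q`,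
iff there is `t` with `p ≤_v t ≤_h q`. -/
theorem stmt5 (p q : ∀ i, P i)
    (hp : (starSupp p).Countable) (hq : (starSupp q).Countable) :
    (starLe p q ↔ ∃ r : ∀ i, P i, (starSupp r).Countable ∧ starLeH p r ∧ starLeV r q) ∧
    (starLe p q ↔ ∃ t : ∀ i, P i, (starSupp t).Countable ∧ starLeV p t ∧ starLeH t q) := by
  classical
  constructor
  · constructor
    · rintro ⟨hle, hfin⟩
      refine ⟨fun i => if q i = ⊤ then ⊤ else p i, ?_, ?_, ⟨⟨?_, ?_⟩, ?_⟩⟩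
      · apply hq.mono
        intro i hi
        simp only [starSupp, Set.mem_setOf_eq] at hi ⊢
        intro h; apply hi; simp [h]
      · intro i hi
        simp only [ne_eq, ite_eq_left_iff, not_forall] at hi
        obtain ⟨h, _⟩ := hi
        simp [h]
      · intro i
        by_cases h : q i = ⊤ <;> simp [h]
        exact hle i
      · apply hfin.subset
        intro i hi
        simp only [Set.mem_setOf_eq] at hi ⊢
        rcases hi with ⟨h1, h2⟩
        rw [if_neg h2.ne] at h1
        exact ⟨h1, h2⟩
      · ext i
        simp only [starSupp, Set.mem_setOf_eq]
        constructor
        · intro h hq'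
          exact h (by simp [hq'])
        · intro h
          have hp' : p i ≠ ⊤ := fun hp' => h (top_le_iff.mp (hp' ▸ hle i))
          simp [h, hp']
    · rintro ⟨r, _, hpr, ⟨⟨hle, hfin⟩, hsupp⟩⟩
      have hrq : ∀ i, r i = ⊤ → q i = ⊤ := by
        intro i h
        by_contra hq'
        have : i ∈ starSupp r := hsupp ▸ (hq' : i ∈ starSupp q)
        exact this h
      constructor
      · intro i
        by_cases h : r i = ⊤
        · rw [hrq i h]
          exact le_top
        · rw [hpr i h]
          exact hle i
      · apply hfin.subset
        intro i hi
        simp only [Set.mem_setOf_eq] at hi ⊢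
        rcases hi with ⟨h1, h2⟩
        have hr : r i ≠ ⊤ := fun h => h2.ne (hrq i h)
        rw [hpr i hr] at h1
        exact ⟨h1, h2⟩
  · constructor
    · rintro ⟨hle, hfin⟩
      have hqp : ∀ i, p i = ⊤ → q i = ⊤ := fun i h => top_le_iff.mp (h ▸ hle i)
      refine ⟨fun i => if q i = ⊤ then p i else q i, ?_, ⟨⟨?_, ?_⟩, ?_⟩, ?_⟩
      · apply hp.mono
        intro i hi
        simp only [starSupp, Set.mem_setOf_eq] at hi ⊢
        intro h
        by_cases hqi : q i = ⊤
        · rw [if_pos hqi] at hi; exact hi h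
        · rw [if_neg hqi] at hi; exact hi (hqp i h)
      · intro i
        by_cases h : q i = ⊤ <;> simp [h]
        exact hle i
      · apply hfin.subset
        intro i hi
        simp only [Set.mem_setOf_eq] at hi ⊢
        by_cases h : q i = ⊤
        · simp [h] at hi
        · rw [if_neg h] at hi
          exact hi
      · ext i
        simp only [starSupp, Set.mem_setOf_eq]
        by_cases h : q i = ⊤
        · simp [h]
        · simp [h]
          exact fun hp' => h (hqp i hp')
      · intro i h
        simp [h]
    · rintro ⟨t, _, ⟨⟨hle, hfin⟩, hsupp⟩, htq⟩
      constructor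
      · intro i
        by_cases h : q i = ⊤
        · rw [h]; exact le_top
        · rw [← htq i h]; exact hle i
      · apply hfin.subset
        intro i hi
        simp only [Set.mem_setOf_eq] at hi ⊢
        rcases hi with ⟨h1, h2⟩
        rw [← htq i h2.ne] at h1 h2
        exact ⟨h1, h2⟩
end

section
/- Suppose κ has countable cofinality, κ = ⋃_{n<ω} I_n with each |I_n| < κ, and for each n there is a family 𝒜_n ⊆ [I_n]^ω with |𝒜_n| ≤ |I_n| refining [I_n]^{ω₁}. Then 𝒜 = ⋃_n 𝒜_n has cardinality at most κ and refines [κ]^{ω₁}. -/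
open Cardinal

/-- Suppose `κ = #α` has countable cofinality, `α = ⋃ₙ Iₙ` with each `|Iₙ| < κ`, and for each
`n` there is `𝒜ₙ ⊆ [Iₙ]^ω` with `|𝒜ₙ| ≤ |Iₙ|` refining `[Iₙ]^{ω₁}`. Then `𝒜 = ⋃ₙ 𝒜ₙ` has
cardinality at most `κ` and refines `[α]^{ω₁}`. -/
theorem stmt7 {α : Type} (hcof : (Cardinal.mk α).ord.cof = Cardinal.aleph0)
    (I : ℕ → Set α) (hIcover : (⋃ n, I n) = Set.univ)
    (hIsmall : ∀ n, #(I n) < #α)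
    (𝒜 : ℕ → Set (Set α))
    (h𝒜sub : ∀ n, ∀ A ∈ 𝒜 n, A ⊆ I n ∧ #A = Cardinal.aleph0)
    (h𝒜card : ∀ n, #(𝒜 n) ≤ #(I n))
    (h𝒜ref : ∀ n, ∀ X : Set α, X ⊆ I n → #X = Cardinal.aleph 1 → ∃ A ∈ 𝒜 n, A ⊆ X) :
    #(⋃ n, 𝒜 n : Set (Set α)) ≤ #α ∧
    ∀ X : Set α, #X = Cardinal.aleph 1 → ∃ A ∈ ⋃ n, 𝒜 n, A ⊆ X := by
  have hinf : Cardinal.aleph0 ≤ #α := hcof ▸ Ordinal.cof_ord_le (#α)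
  constructor
  · calc #(⋃ n, 𝒜 n : Set (Set α)) ≤ #ℕ * ⨆ n, #(𝒜 n) := Cardinal.mk_iUnion_le _
      _ ≤ Cardinal.aleph0 * #α := by
          apply mul_le_mul'
          · simp
          · exact ciSup_le' fun n => (h𝒜card n).trans (hIsmall n).le
      _ = #α := by
          rw [Cardinal.aleph0_mul_eq hinf]
  · intro X hX
    have hXU : X = ⋃ n, (X ∩ I n) := by
      rw [← Set.inter_iUnion, hIcover, Set.inter_univ]
    have : ∃ n, #(X ∩ I n : Set α) = Cardinal.aleph 1 := by
      by_contra h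
      push_neg at h
      have hsmall : ∀ n, #(X ∩ I n : Set α) ≤ Cardinal.aleph0 := by
        intro n
        have hle : #(X ∩ I n : Set α) ≤ #X :=
          Cardinal.mk_le_mk_of_subset Set.inter_subset_left
        rw [hX] at hle
        have := lt_of_le_of_ne hle (h n)
        exact Set.Countable.le_aleph0 ((Cardinal.countable_iff_lt_aleph_one _).mpr this)
      have : #X ≤ Cardinal.aleph0 := by
        calc #X = #(⋃ n, (X ∩ I n) : Set α) := by rw [← hXU]
          _ ≤ #ℕ * ⨆ n, #(X ∩ I n : Set α) := Cardinal.mk_iUnion_le _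
          _ ≤ Cardinal.aleph0 * Cardinal.aleph0 := by
              apply mul_le_mul'
              · simp
              · exact ciSup_le' hsmall
          _ = Cardinal.aleph0 := by simp
      rw [hX] at this
      exact absurd this (by simpa using (Cardinal.aleph0_lt_aleph_one).not_le)
    obtain ⟨n, hn⟩ := this
    obtain ⟨A, hA, hAX⟩ := h𝒜ref n (X ∩ I n) Set.inter_subset_right hn
    exact ⟨A, Set.mem_iUnion.mpr ⟨n, hA⟩, hAX.trans Set.inter_subset_left⟩
end
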